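/- The easy direction of Cheeger's inequality: for any weighted graph G and any vertex subset C with 0 < vol(C) ≤ vol(V)/2, φ(C) ≥ λ_2(L(G))/2; consequently the conductance Φ(G) = min over such C of φ(C) satisfies Φ(G) ≥ λ_2/2. -/

import Mathlib

open Matrix Finset

/-- The normalized Laplacian `L(G) = I - D^{-1/2} A D^{-1/2}`. -/
noncomputable def normLap {n : ℕ} (A : Matrix (Fin n) (Fin n) ℝ) :
    Matrix (Fin n) (Fin n) ℝ :=
  1 - (Matrix.diagonal fun i => (Real.sqrt (∑ j, A i j))⁻¹) * A *
      (Matrix.diagonal fun i => (Real.sqrt (∑ j, A i j))⁻¹)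

/-- `lam` is the nondecreasing enumeration of the eigenvalues (with multiplicity)
of the matrix `M`. -/
def SortedEigs {n : ℕ} (M : Matrix (Fin n) (Fin n) ℝ) (lam : Fin n → ℝ) : Prop :=
  Monotone lam ∧ M.charpoly = ∏ i, (Polynomial.X - Polynomial.C (lam i))

section spectral
open Polynomial

lemma charpoly_unitary_conj {n : ℕ} (U M : Matrix (Fin n) (Fin n) ℝ)
    (h1 : U * star U = 1) :
    (U * M * star U).charpoly = M.charpoly := by
  have key : charmatrix (U * M * star U)
      = (C : ℝ →+* ℝ[X]).mapMatrix U * charmatrix M * (C : ℝ →+* ℝ[X]).mapMatrix (star U) := by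
    rw [charmatrix, charmatrix, mul_sub, sub_mul]
    congr 1
    · have hc := (Matrix.scalar_commute (X : ℝ[X]) (Commute.all X)
        ((C : ℝ →+* ℝ[X]).mapMatrix U)).symm
      calc Matrix.scalar (Fin n) (X : ℝ[X])
          = Matrix.scalar (Fin n) (X : ℝ[X]) *
            ((C : ℝ →+* ℝ[X]).mapMatrix U * (C : ℝ →+* ℝ[X]).mapMatrix (star U)) := by
            rw [← _root_.map_mul, h1, _root_.map_one, mul_one]
        _ = (C : ℝ →+* ℝ[X]).mapMatrix U * Matrix.scalar (Fin n) (X : ℝ[X]) *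
            (C : ℝ →+* ℝ[X]).mapMatrix (star U) := by
            rw [← mul_assoc, hc]
    · simp [_root_.map_mul, mul_assoc]
  rw [Matrix.charpoly, Matrix.charpoly, key, det_mul, det_mul]
  have : ((C : ℝ →+* ℝ[X]).mapMatrix U).det * ((C : ℝ →+* ℝ[X]).mapMatrix (star U)).det = 1 := by
    rw [← det_mul, ← _root_.map_mul, h1, _root_.map_one, det_one]
  ring_nf
  calc ((C : ℝ →+* ℝ[X]).mapMatrix U).det * (charmatrix M).det *
        ((C : ℝ →+* ℝ[X]).mapMatrix (star U)).det
      = (charmatrix M).det * (((C : ℝ →+* ℝ[X]).mapMatrix U).det *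
        ((C : ℝ →+* ℝ[X]).mapMatrix (star U)).det) := by ring
    _ = (charmatrix M).det := by rw [this, mul_one]

lemma charpoly_eq_prod_eigs {n : ℕ} (M : Matrix (Fin n) (Fin n) ℝ) (hM : M.IsHermitian) :
    M.charpoly = ∏ i, (X - C (hM.eigenvalues i)) := by
  conv_lhs => rw [hM.spectral_theorem, Unitary.conjStarAlgAut_apply]
  rw [charpoly_unitary_conj _ _ (mem_unitaryGroup_iff.mp (hM.eigenvectorUnitary).2)]
  rw [Matrix.charpoly_of_upperTriangular _ (Matrix.blockTriangular_diagonal _)]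
  simp

lemma rayleigh_lower {n : ℕ} (hn : 1 < n) (M : Matrix (Fin n) (Fin n) ℝ)
    (hM : M.IsHermitian) (hpsd : ∀ y : Fin n → ℝ, 0 ≤ y ⬝ᵥ M *ᵥ y)
    (lam : Fin n → ℝ) (hlam : SortedEigs M lam)
    (v : Fin n → ℝ) (hv : v ≠ 0) (hMv : M *ᵥ v = 0)
    (x : Fin n → ℝ) (hxv : x ⬝ᵥ v = 0) :
    lam ⟨1, hn⟩ * (x ⬝ᵥ x) ≤ x ⬝ᵥ M *ᵥ x := by
  rcases le_or_gt (lam ⟨1, hn⟩) 0 with h0 | h0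
  · have hxx : 0 ≤ x ⬝ᵥ x := by
      simpa [dotProduct] using Finset.sum_nonneg fun i _ => mul_self_nonneg (x i)
    exact le_trans (mul_nonpos_of_nonpos_of_nonneg h0 hxx) (hpsd x)
  have hMT : Mᵀ = M := by
    ext i j
    have h := congrFun (congrFun hM i) j
    simpa [conjTranspose_apply] using h
  set μ : Fin n → ℝ := hM.eigenvalues with hμdef
  set u : Fin n → (Fin n → ℝ) := fun i => ⇑(hM.eigenvectorBasis i) with hudef
  set U : Matrix (Fin n) (Fin n) ℝ := (hM.eigenvectorUnitary : Matrix (Fin n) (Fin n) ℝ)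
    with hUdef
  have hUapp : ∀ i j, U i j = u j i := fun i j => hM.eigenvectorUnitary_apply i j
  have hU1 : U * star U = 1 := mem_unitaryGroup_iff.mp hM.eigenvectorUnitary.2
  have hU2 : star U * U = 1 := mem_unitaryGroup_iff'.mp hM.eigenvectorUnitary.2
  have hstarU : ∀ i j, (star U) i j = U j i := by
    intro i j; simp [star, conjTranspose_apply]
  have horth : ∀ i j, u i ⬝ᵥ u j = if i = j then 1 else 0 := by
    intro i j
    have h := congrFun (congrFun hU2 i) j
    simp only [Matrix.mul_apply, Matrix.one_apply] at h
    rw [← h, dotProduct]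
    exact Finset.sum_congr rfl fun k _ => by rw [hstarU, hUapp, hUapp]
  have hrow : ∀ k l, ∑ j, u j k * u j l = if k = l then 1 else 0 := by
    intro k l
    have h := congrFun (congrFun hU1 k) l
    simp only [Matrix.mul_apply, Matrix.one_apply] at h
    rw [← h]
    exact Finset.sum_congr rfl fun j _ => by rw [hstarU, hUapp, hUapp]
  have heig : ∀ i, M *ᵥ u i = μ i • u i := fun i => hM.mulVec_eigenvectorBasis i
  have hexp : ∀ y : Fin n → ℝ, y = ∑ i, (u i ⬝ᵥ y) • u i := by
    intro y
    funext k
    rw [Finset.sum_apply]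
    have : ∑ i, ((u i ⬝ᵥ y) • u i) k = ∑ i, ∑ l, u i k * u i l * y l := by
      refine Finset.sum_congr rfl fun i _ => ?_
      simp only [Pi.smul_apply, smul_eq_mul, dotProduct, Finset.sum_mul]
      exact Finset.sum_congr rfl fun l _ => by ring
    rw [this, Finset.sum_comm]
    have : ∀ l, ∑ i, u i k * u i l * y l = (if k = l then 1 else 0) * y l := by
      intro l; rw [← Finset.sum_mul, hrow]
    simp only [this, ite_mul, one_mul, zero_mul]
    simp
  -- multiset of eigenvalues equality
  have hms : Multiset.map lam Finset.univ.val = Multiset.map μ Finset.univ.val := by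
    have h1 := hlam.2
    rw [charpoly_eq_prod_eigs M hM] at h1
    have h2 : ((Multiset.map lam Finset.univ.val).map fun a => X - C a).prod
        = ((Multiset.map μ Finset.univ.val).map fun a => X - C a).prod := by
      rw [Multiset.map_map, Multiset.map_map]
      simpa [Finset.prod_eq_multiset_prod, Function.comp] using h1.symm
    rw [← Polynomial.roots_multiset_prod_X_sub_C (Multiset.map lam Finset.univ.val),
        ← Polynomial.roots_multiset_prod_X_sub_C (Multiset.map μ Finset.univ.val), h2]
  have hmem1 : ∀ i, ∃ j, lam j = μ i := by
    intro i
    have hmem : μ i ∈ Multiset.map lam Finset.univ.val := by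
      rw [hms]
      exact Multiset.mem_map_of_mem _ (Finset.mem_univ_val i)
    rcases Multiset.mem_map.mp hmem with ⟨j, _, hj⟩
    exact ⟨j, hj⟩
  have hmem2 : ∀ j, ∃ i, μ i = lam j := by
    intro j
    have hmem : lam j ∈ Multiset.map μ Finset.univ.val := by
      rw [← hms]
      exact Multiset.mem_map_of_mem _ (Finset.mem_univ_val j)
    rcases Multiset.mem_map.mp hmem with ⟨i, _, hi⟩
    exact ⟨i, hi⟩
  have hμnn : ∀ i, 0 ≤ μ i := by
    intro i
    have h := hpsd (u i)
    rw [heig i, dotProduct_smul, smul_eq_mul, horth i i, if_pos rfl, mul_one] at h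
    exact h
  have hlamnn : ∀ j, 0 ≤ lam j := fun j => by
    obtain ⟨i, hi⟩ := hmem2 j; rw [← hi]; exact hμnn i
  set b : Fin n → ℝ := fun i => u i ⬝ᵥ v with hbdef
  have hb0 : ∀ i, μ i * b i = 0 := by
    intro i
    have h : u i ⬝ᵥ (M *ᵥ v) = μ i * b i := by
      rw [dotProduct_mulVec, ← Matrix.mulVec_transpose, hMT, heig i]
      rw [smul_dotProduct, smul_eq_mul]
    rw [hMv, dotProduct_zero] at h
    exact h.symm
  have hbne : ∃ i₀, b i₀ ≠ 0 := by
    by_contra h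
    push_neg at h
    apply hv
    rw [hexp v]
    simp [hbdef ▸ h]
  obtain ⟨i₀, hbi₀⟩ := hbne
  have hμi₀ : μ i₀ = 0 := by
    rcases mul_eq_zero.mp (hb0 i₀) with h | h
    · exact h
    · exact absurd h hbi₀
  have hlam0 : lam ⟨0, by omega⟩ = 0 := by
    obtain ⟨j, hj⟩ := hmem1 i₀
    have h1 : lam ⟨0, by omega⟩ ≤ lam j := hlam.1 (by simp [Fin.le_def])
    rw [hj, hμi₀] at h1
    exact le_antisymm h1 (hlamnn _)
  have hlampos : ∀ j : Fin n, j ≠ ⟨0, by omega⟩ → 0 < lam j := by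
    intro j hj
    have h1 : (⟨1, hn⟩ : Fin n) ≤ j := by
      rw [Fin.le_def]
      have : j.val ≠ 0 := fun h => hj (Fin.ext h)
      show 1 ≤ j.val
      omega
    exact lt_of_lt_of_le h0 (hlam.1 h1)
  have hcountlam : (Finset.univ.filter fun j : Fin n => lam j = 0).card = 1 := by
    rw [Finset.card_eq_one]
    refine ⟨⟨0, by omega⟩, ?_⟩
    ext j
    simp only [Finset.mem_filter, Finset.mem_univ, true_and, Finset.mem_singleton]
    constructor
    · intro hj
      by_contra hne
      exact absurd hj (ne_of_gt (hlampos j hne))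
    · intro hj; rw [hj]; exact hlam0
  have hcountμ : (Finset.univ.filter fun i : Fin n => μ i = 0).card = 1 := by
    have key : ∀ f : Fin n → ℝ, (Finset.univ.filter fun i : Fin n => f i = 0).card
        = Multiset.count 0 (Multiset.map f Finset.univ.val) := by
      intro f
      rw [Multiset.count_map]
      have h1 : (Finset.univ.filter fun i : Fin n => f i = 0).val
          = Multiset.filter (fun a => 0 = f a) Finset.univ.val := by
        rw [Finset.filter_val]
        exact Multiset.filter_congr fun a _ => eq_comm
      rw [Finset.card, h1]
    rw [key, ← hms, ← key, hcountlam]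
  have huniq : ∀ i, μ i = 0 → i = i₀ := by
    intro i hi
    by_contra hne
    have h2 : 1 < (Finset.univ.filter fun i : Fin n => μ i = 0).card :=
      Finset.one_lt_card.mpr ⟨i, by simp [hi], i₀, by simp [hμi₀], hne⟩
    omega
  have hvb : v = b i₀ • u i₀ := by
    conv_lhs => rw [hexp v]
    rw [Finset.sum_eq_single i₀]
    · intro i _ hi
      have hbi : b i = 0 := by
        rcases mul_eq_zero.mp (hb0 i) with h | h
        · exact absurd (huniq i h) hi
        · exact h
      show b i • u i = 0
      rw [hbi, zero_smul]
    · intro h; exact absurd (Finset.mem_univ i₀) h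
  have hdotsum : ∀ (y : Fin n → ℝ) (w : Fin n → (Fin n → ℝ)),
      y ⬝ᵥ (∑ i, w i) = ∑ i, y ⬝ᵥ w i := by
    intro y w
    simp only [dotProduct, Finset.sum_apply, Finset.mul_sum]
    rw [Finset.sum_comm]
  have hc0 : u i₀ ⬝ᵥ x = 0 := by
    have h : x ⬝ᵥ v = b i₀ * (x ⬝ᵥ u i₀) := by
      rw [hvb, dotProduct_smul, smul_eq_mul]
    rw [hxv] at h
    have h2 := (mul_eq_zero.mp h.symm).resolve_left hbi₀
    rw [dotProduct_comm] at h2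
    exact h2
  have hμge : ∀ i, i ≠ i₀ → lam ⟨1, hn⟩ ≤ μ i := by
    intro i hi
    obtain ⟨j, hj⟩ := hmem1 i
    have hμne : μ i ≠ 0 := fun h => hi (huniq i h)
    have hjne : j ≠ ⟨0, by omega⟩ := fun h => hμne (by rw [← hj, h, hlam0])
    have hle : (⟨1, hn⟩ : Fin n) ≤ j := by
      rw [Fin.le_def]
      have : j.val ≠ 0 := fun h => hjne (Fin.ext h)
      show 1 ≤ j.val
      omega
    calc lam ⟨1, hn⟩ ≤ lam j := hlam.1 hle
      _ = μ i := hj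
  have hxexp := hexp x
  have hxx : x ⬝ᵥ x = ∑ i, (u i ⬝ᵥ x) ^ 2 := by
    calc x ⬝ᵥ x = x ⬝ᵥ ∑ i, (u i ⬝ᵥ x) • u i := congrArg (fun z => x ⬝ᵥ z) hxexp
      _ = ∑ i, x ⬝ᵥ ((u i ⬝ᵥ x) • u i) := hdotsum _ _
      _ = ∑ i, (u i ⬝ᵥ x) ^ 2 := by
          refine Finset.sum_congr rfl fun i _ => ?_
          rw [dotProduct_smul, smul_eq_mul, dotProduct_comm]
          ring
  have hMx : x ⬝ᵥ M *ᵥ x = ∑ i, μ i * (u i ⬝ᵥ x) ^ 2 := by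
    have h1 : M *ᵥ x = ∑ i, (u i ⬝ᵥ x) • (μ i • u i) := by
      conv_lhs => rw [hxexp]
      rw [← Matrix.mulVecLin_apply, map_sum]
      exact Finset.sum_congr rfl fun i _ => by
        rw [_root_.map_smul, Matrix.mulVecLin_apply, heig i]
    rw [h1, hdotsum]
    refine Finset.sum_congr rfl fun i _ => ?_
    rw [dotProduct_smul, dotProduct_smul, smul_eq_mul, smul_eq_mul, dotProduct_comm]
    ring
  rw [hxx, hMx, Finset.mul_sum]
  refine Finset.sum_le_sum fun i _ => ?_
  rcases eq_or_ne i i₀ with rfl | hne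
  · rw [hc0]
    simp
  · exact mul_le_mul_of_nonneg_right (hμge i hne) (sq_nonneg _)

end spectral

lemma normLap_apply {n : ℕ} (A : Matrix (Fin n) (Fin n) ℝ) (i j : Fin n) :
    normLap A i j = (if i = j then 1 else 0)
      - (Real.sqrt (∑ k, A i k))⁻¹ * A i j * (Real.sqrt (∑ k, A j k))⁻¹ := by
  simp [normLap, Matrix.sub_apply, Matrix.one_apply, Matrix.mul_diagonal,
    Matrix.diagonal_mul]

section helper
variable {n : ℕ} (A : Matrix (Fin n) (Fin n) ℝ)

lemma normLap_mulVec (hdeg : ∀ i, 0 < ∑ j, A i j) (g : Fin n → ℝ) (i : Fin n) :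
    (normLap A *ᵥ fun k => Real.sqrt (∑ j, A k j) * g k) i
      = Real.sqrt (∑ j, A i j) * g i
        - (Real.sqrt (∑ j, A i j))⁻¹ * ∑ j, A i j * g j := by
  have hs : ∀ k, Real.sqrt (∑ j, A k j) ≠ 0 :=
    fun k => ne_of_gt (Real.sqrt_pos.mpr (hdeg k))
  rw [Matrix.mulVec, dotProduct]
  simp only [normLap_apply, sub_mul, ite_mul, one_mul, zero_mul]
  rw [Finset.sum_sub_distrib, Finset.sum_ite_eq (Finset.univ) i]
  simp only [Finset.mem_univ, if_pos]
  congr 1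
  rw [Finset.mul_sum]
  refine Finset.sum_congr rfl fun j _ => ?_
  have e1 : (Real.sqrt (∑ k, A i k))⁻¹ * A i j * (Real.sqrt (∑ k, A j k))⁻¹ *
        (Real.sqrt (∑ k, A j k) * g j)
      = ((Real.sqrt (∑ k, A j k))⁻¹ * Real.sqrt (∑ k, A j k)) *
        ((Real.sqrt (∑ k, A i k))⁻¹ * (A i j * g j)) := by ring
  rw [e1, inv_mul_cancel₀ (hs j), one_mul]

lemma normLap_quadform (hdeg : ∀ i, 0 < ∑ j, A i j) (g : Fin n → ℝ) :
    (fun k => Real.sqrt (∑ j, A k j) * g k) ⬝ᵥ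
        (normLap A *ᵥ fun k => Real.sqrt (∑ j, A k j) * g k)
      = (∑ i, (∑ j, A i j) * g i ^ 2) - ∑ i, ∑ j, A i j * (g i * g j) := by
  have hs : ∀ k, Real.sqrt (∑ j, A k j) ≠ 0 :=
    fun k => ne_of_gt (Real.sqrt_pos.mpr (hdeg k))
  have hsq : ∀ k, Real.sqrt (∑ j, A k j) * Real.sqrt (∑ j, A k j) = ∑ j, A k j :=
    fun k => Real.mul_self_sqrt (le_of_lt (hdeg k))
  rw [dotProduct]
  have h1 : ∀ i, (Real.sqrt (∑ j, A i j) * g i) * (normLap A *ᵥ fun k => Real.sqrt (∑ j, A k j) * g k) i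
      = (∑ j, A i j) * g i ^ 2 - ∑ j, A i j * (g i * g j) := by
    intro i
    rw [normLap_mulVec A hdeg g i]
    have e1 : Real.sqrt (∑ j, A i j) * g i * (Real.sqrt (∑ j, A i j) * g i
        - (Real.sqrt (∑ j, A i j))⁻¹ * ∑ j, A i j * g j)
        = (Real.sqrt (∑ j, A i j) * Real.sqrt (∑ j, A i j)) * g i ^ 2
          - (Real.sqrt (∑ j, A i j) * (Real.sqrt (∑ j, A i j))⁻¹)
            * (g i * ∑ j, A i j * g j) := by ring
    rw [e1, hsq i, mul_inv_cancel₀ (hs i), one_mul, Finset.mul_sum]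
    congr 1
    exact Finset.sum_congr rfl fun j _ => by ring
  simp only [h1]
  rw [Finset.sum_sub_distrib]

lemma energy_eq (hA : A.IsSymm) (g : Fin n → ℝ) :
    ∑ i, ∑ j, A i j * (g i - g j) ^ 2
      = 2 * ((∑ i, (∑ j, A i j) * g i ^ 2) - ∑ i, ∑ j, A i j * (g i * g j)) := by
  have hswap : ∑ i, ∑ j, A i j * g j ^ 2 = ∑ i, (∑ j, A i j) * g i ^ 2 := by
    rw [Finset.sum_comm]
    refine Finset.sum_congr rfl fun j _ => ?_
    rw [← Finset.sum_mul]
    congr 1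
    exact Finset.sum_congr rfl fun i _ => hA.apply j i
  have h1 : ∀ i j, A i j * (g i - g j) ^ 2
      = A i j * g i ^ 2 + A i j * g j ^ 2 - 2 * (A i j * (g i * g j)) := by
    intro i j; ring
  have hfirst : ∑ i, ∑ j, A i j * g i ^ 2 = ∑ i, (∑ j, A i j) * g i ^ 2 :=
    Finset.sum_congr rfl fun i _ => (Finset.sum_mul _ _ _).symm
  simp only [h1, Finset.sum_add_distrib, Finset.sum_sub_distrib, ← Finset.mul_sum]
  rw [hfirst, hswap]
  ring



lemma normLap_isHermitian (hA : A.IsSymm) : (normLap A).IsHermitian := by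
  ext i j
  rw [conjTranspose_apply]
  show star (normLap A j i) = normLap A i j
  rw [star_trivial, normLap_apply, normLap_apply, hA.apply i j]
  have he : (if j = i then (1:ℝ) else 0) = (if i = j then 1 else 0) := by
    by_cases h : i = j <;> simp [h, eq_comm]
  rw [he]
  ring

lemma normLap_kernel (hdeg : ∀ i, 0 < ∑ j, A i j) :
    normLap A *ᵥ (fun i => Real.sqrt (∑ j, A i j)) = 0 := by
  have hs : ∀ k, Real.sqrt (∑ j, A k j) ≠ 0 :=
    fun k => ne_of_gt (Real.sqrt_pos.mpr (hdeg k))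
  funext i
  have h := normLap_mulVec A hdeg (fun _ => 1) i
  simp only [mul_one] at h
  show (normLap A *ᵥ fun k => Real.sqrt (∑ j, A k j)) i = 0
  rw [h]
  have h2 : (Real.sqrt (∑ j, A i j))⁻¹ * (∑ j, A i j) = Real.sqrt (∑ j, A i j) := by
    rw [inv_mul_eq_iff_eq_mul₀ (hs i), Real.mul_self_sqrt (le_of_lt (hdeg i))]
  rw [h2, sub_self]

lemma normLap_psd (hA : A.IsSymm) (hA0 : ∀ i j, 0 ≤ A i j)
    (hdeg : ∀ i, 0 < ∑ j, A i j) (y : Fin n → ℝ) :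
    0 ≤ y ⬝ᵥ normLap A *ᵥ y := by
  have hs : ∀ k, Real.sqrt (∑ j, A k j) ≠ 0 :=
    fun k => ne_of_gt (Real.sqrt_pos.mpr (hdeg k))
  set g : Fin n → ℝ := fun i => (Real.sqrt (∑ j, A i j))⁻¹ * y i with hg
  have hy : y = fun k => Real.sqrt (∑ j, A k j) * g k := by
    funext k
    rw [hg, mul_inv_cancel_left₀ (hs k)]
  have hE : 0 ≤ ∑ i, ∑ j, A i j * (g i - g j) ^ 2 :=
    Finset.sum_nonneg fun i _ => Finset.sum_nonneg fun j _ =>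
      mul_nonneg (hA0 i j) (sq_nonneg _)
  have hee := energy_eq A hA g
  rw [hy, normLap_quadform A hdeg g]
  linarith

end helper

/-- The easy direction of Cheeger's inequality: for a connected weighted graph and any
vertex subset `C` with `0 < vol(C) ≤ vol(V)/2`, the normalized cut satisfies
`φ(C) ≥ λ₂/2`; consequently the conductance `Φ(G) = min φ(C)` satisfies
`Φ(G) ≥ λ₂/2`. -/
theorem cheeger_easy_direction {n : ℕ} (hn : 1 < n)
    (A : Matrix (Fin n) (Fin n) ℝ)
    (hA : A.IsSymm) (hA0 : ∀ i j, 0 ≤ A i j) (hdeg : ∀ i, 0 < ∑ j, A i j)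
    (hconn : (SimpleGraph.fromRel fun a b => 0 < A a b).Connected)
    (lam : Fin n → ℝ) (hlam : SortedEigs (normLap A) lam) :
    ∀ C : Finset (Fin n), 0 < ∑ a ∈ C, ∑ b, A a b →
      (∑ a ∈ C, ∑ b, A a b) ≤ (∑ a, ∑ b, A a b) / 2 →
      lam ⟨1, hn⟩ / 2 ≤ (∑ a ∈ C, ∑ b ∈ Cᶜ, A a b) / (∑ a ∈ C, ∑ b, A a b) := by
  intro C hvolC hhalf
  have hspos : ∀ k, (0:ℝ) < Real.sqrt (∑ j, A k j) :=
    fun k => Real.sqrt_pos.mpr (hdeg k)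
  have hvolpos : (0:ℝ) < ∑ i, ∑ j, A i j :=
    Finset.sum_pos (fun i _ => hdeg i) ⟨⟨0, by omega⟩, Finset.mem_univ _⟩
  obtain ⟨α, hα⟩ : ∃ α : ℝ, α = (∑ a ∈ C, ∑ b, A a b) / (∑ i, ∑ j, A i j) := ⟨_, rfl⟩
  obtain ⟨g, hgdef⟩ : ∃ g : Fin n → ℝ,
      g = fun i => (if i ∈ C then (1:ℝ) else 0) - α := ⟨_, rfl⟩
  have hαvol : α * (∑ i, ∑ j, A i j) = ∑ a ∈ C, ∑ b, A a b := by
    rw [hα]; exact div_mul_cancel₀ _ (ne_of_gt hvolpos)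
  have hite : ∑ i, (∑ j, A i j) * (if i ∈ C then (1:ℝ) else 0) = ∑ a ∈ C, ∑ b, A a b := by
    simp only [mul_ite, mul_one, mul_zero]
    rw [Finset.sum_ite_mem, Finset.univ_inter]
  -- orthogonality to the kernel vector
  have hxs : (fun k => Real.sqrt (∑ j, A k j) * g k) ⬝ᵥ (fun i => Real.sqrt (∑ j, A i j)) = 0 := by
    rw [dotProduct]
    have h1 : ∀ i, (Real.sqrt (∑ j, A i j) * g i) * Real.sqrt (∑ j, A i j)
        = (∑ j, A i j) * g i := by
      intro i
      rw [show (Real.sqrt (∑ j, A i j) * g i) * Real.sqrt (∑ j, A i j)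
          = (Real.sqrt (∑ j, A i j) * Real.sqrt (∑ j, A i j)) * g i from by ring,
        Real.mul_self_sqrt (le_of_lt (hdeg i))]
    simp only [h1]
    rw [hgdef]
    simp only [mul_sub]
    rw [Finset.sum_sub_distrib, hite,
      show ∑ i, (∑ j, A i j) * α = α * ∑ i, ∑ j, A i j from by
        rw [Finset.mul_sum]; exact Finset.sum_congr rfl fun i _ => mul_comm _ _,
      hαvol, sub_self]
  -- value of the quadratic form : the cut
  have hcut2 : ∑ i, ∑ j, A i j * (g i - g j) ^ 2 = 2 * (∑ a ∈ C, ∑ b ∈ Cᶜ, A a b) := by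
    have hterm : ∀ i j, A i j * (g i - g j) ^ 2 =
        if i ∈ C then (if j ∈ C then 0 else A i j) else (if j ∈ C then A i j else 0) := by
      intro i j
      rw [show g i - g j = (if i ∈ C then (1:ℝ) else 0) - (if j ∈ C then 1 else 0) from by
        rw [hgdef]; ring]
      by_cases hi : i ∈ C <;> by_cases hj : j ∈ C <;> simp [hi, hj]
    simp only [hterm]
    rw [← Finset.sum_add_sum_compl C]
    have hp1 : (∑ i ∈ C, ∑ j, if i ∈ C then (if j ∈ C then (0:ℝ) else A i j)
          else (if j ∈ C then A i j else 0)) = ∑ a ∈ C, ∑ b ∈ Cᶜ, A a b := by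
      refine Finset.sum_congr rfl fun i hi => ?_
      simp only [if_pos hi]
      rw [show (∑ j, if j ∈ C then (0:ℝ) else A i j)
          = ∑ j, if j ∈ Cᶜ then A i j else 0 from Finset.sum_congr rfl fun j _ => by
            by_cases hj : j ∈ C <;> simp [hj],
        Finset.sum_ite_mem, Finset.univ_inter]
    have hp2 : (∑ i ∈ Cᶜ, ∑ j, if i ∈ C then (if j ∈ C then (0:ℝ) else A i j)
          else (if j ∈ C then A i j else 0)) = ∑ a ∈ C, ∑ b ∈ Cᶜ, A a b := by
      have e1 : (∑ i ∈ Cᶜ, ∑ j, if i ∈ C then (if j ∈ C then (0:ℝ) else A i j)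
          else (if j ∈ C then A i j else 0)) = ∑ i ∈ Cᶜ, ∑ j ∈ C, A i j := by
        refine Finset.sum_congr rfl fun i hi => ?_
        simp only [if_neg (Finset.mem_compl.mp hi)]
        rw [Finset.sum_ite_mem, Finset.univ_inter]
      rw [e1]; refine Finset.sum_comm.trans ?_
      exact Finset.sum_congr rfl fun j _ => Finset.sum_congr rfl fun i _ => hA.apply j i
    rw [hp1, hp2]
    ring
  have hQ : (fun k => Real.sqrt (∑ j, A k j) * g k) ⬝ᵥ
        (normLap A *ᵥ fun k => Real.sqrt (∑ j, A k j) * g k)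
      = ∑ a ∈ C, ∑ b ∈ Cᶜ, A a b := by
    rw [normLap_quadform A hdeg g]
    have hee := energy_eq A hA g
    linarith [hcut2]
  -- value of the norm
  have hxx : (fun k => Real.sqrt (∑ j, A k j) * g k) ⬝ᵥ
        (fun k => Real.sqrt (∑ j, A k j) * g k)
      = (∑ a ∈ C, ∑ b, A a b) * (1 - α) := by
    rw [dotProduct]
    have h1 : ∀ i, (Real.sqrt (∑ j, A i j) * g i) * (Real.sqrt (∑ j, A i j) * g i)
        = (∑ j, A i j) * g i ^ 2 := by
      intro i
      rw [show (Real.sqrt (∑ j, A i j) * g i) * (Real.sqrt (∑ j, A i j) * g i)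
          = (Real.sqrt (∑ j, A i j) * Real.sqrt (∑ j, A i j)) * g i ^ 2 from by ring,
        Real.mul_self_sqrt (le_of_lt (hdeg i))]
    simp only [h1]
    have h2 : ∀ i, (∑ j, A i j) * g i ^ 2
        = (∑ j, A i j) * (if i ∈ C then (1:ℝ) else 0)
          - 2 * α * ((∑ j, A i j) * (if i ∈ C then (1:ℝ) else 0))
          + α ^ 2 * (∑ j, A i j) := by
      intro i
      rw [hgdef]
      by_cases hi : i ∈ C <;> simp [hi] <;> ring
    simp only [h2]
    rw [Finset.sum_add_distrib, Finset.sum_sub_distrib, hite, ← Finset.mul_sum,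
      ← Finset.mul_sum, hite]
    have h3 : α ^ 2 * (∑ i, ∑ j, A i j) = α * (∑ a ∈ C, ∑ b, A a b) := by
      rw [← hαvol]; ring
    rw [h3]
    ring
  have hxxge : (∑ a ∈ C, ∑ b, A a b) / 2 ≤ (fun k => Real.sqrt (∑ j, A k j) * g k) ⬝ᵥ
        (fun k => Real.sqrt (∑ j, A k j) * g k) := by
    rw [hxx]
    have hαle : α ≤ 1 / 2 := by
      rw [hα, div_le_div_iff₀ hvolpos (by norm_num : (0:ℝ) < 2)]
      linarith
    nlinarith [hvolC]
  -- the kernel vector is nonzero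
  have hsne : (fun i => Real.sqrt (∑ j, A i j)) ≠ 0 := by
    intro h
    have h2 := congrFun h ⟨0, by omega⟩
    exact absurd h2 (ne_of_gt (hspos _))
  have hkey := rayleigh_lower hn (normLap A) (normLap_isHermitian A hA)
    (normLap_psd A hA hA0 hdeg) lam hlam (fun i => Real.sqrt (∑ j, A i j)) hsne
    (normLap_kernel A hdeg) (fun k => Real.sqrt (∑ j, A k j) * g k) hxs
  rw [hQ] at hkey
  rcases le_or_gt (lam ⟨1, hn⟩) 0 with hl | hl
  · have hcutnn : 0 ≤ ∑ a ∈ C, ∑ b ∈ Cᶜ, A a b :=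
      Finset.sum_nonneg fun a _ => Finset.sum_nonneg fun b _ => hA0 a b
    have hdiv : 0 ≤ (∑ a ∈ C, ∑ b ∈ Cᶜ, A a b) / (∑ a ∈ C, ∑ b, A a b) :=
      div_nonneg hcutnn (le_of_lt hvolC)
    linarith
  · rw [le_div_iff₀ hvolC]
    have h5 := mul_le_mul_of_nonneg_left hxxge (le_of_lt hl)
    nlinarith
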